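/- Under hypotheses h1 and h2 on f, the sequence defined by t_0 ∈ (0, ρ) and t_{k+1} = |n_f(t_k)| is well defined, strictly decreasing, contained in (0, ρ), and converges to 0. -/

import Mathlib

theorem stmt4 (R : ℝ) (hR : 0 < R) (f f' : ℝ → ℝ)
    (hderiv : ∀ t ∈ Set.Ico (0:ℝ) R, HasDerivWithinAt f (f' t) (Set.Ico 0 R) t)
    (hcont : ContinuousOn f' (Set.Ico 0 R))
    (hf0 : f 0 = 0) (hf'0 : f' 0 = -1)
    (hmono : StrictMonoOn f' (Set.Ico 0 R))
    (ν ρ : ℝ) (hν : ν = sSup {t ∈ Set.Ico 0 R | f' t < 0})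
    (hρ : ρ = sSup {δ : ℝ | δ ∈ Set.Ioo 0 ν ∧ ∀ t ∈ Set.Ioo 0 δ, (f t / f' t - t) / t < 1})
    (t : ℕ → ℝ) (ht0 : t 0 ∈ Set.Ioo 0 ρ)
    (hrec : ∀ k, t (k + 1) = |t k - f (t k) / f' (t k)|) :
    StrictAnti t ∧ (∀ k, t k ∈ Set.Ioo 0 ρ) ∧
      Filter.Tendsto t Filter.atTop (nhds 0) := by
  -- helper: below a real sSup there is an element of the set
  have hgt : ∀ (S : Set ℝ) (x : ℝ), 0 < x → x < sSup S → ∃ s ∈ S, x < s := by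
    intro S x hx hxs
    by_contra h
    push_neg at h
    rcases S.eq_empty_or_nonempty with he | hne
    · rw [he, Real.sSup_empty] at hxs; linarith
    · exact absurd (csSup_le hne h) (not_le.2 hxs)
  -- x < ν gives x < R and f' x < 0
  have hν' : ∀ x, 0 < x → x < ν → x < R ∧ f' x < 0 := by
    intro x hx hxν
    rw [hν] at hxν
    obtain ⟨s, ⟨hsIco, hs'⟩, hxs⟩ := hgt _ x hx hxν
    have hxR : x < R := lt_trans hxs hsIco.2
    refine ⟨hxR, ?_⟩
    have := hmono ⟨hx.le, hxR⟩ hsIco hxs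
    linarith
  -- x < ρ gives x < ν
  have hρν : ∀ x, 0 < x → x < ρ → x < ν := by
    intro x hx hxρ
    rw [hρ] at hxρ
    obtain ⟨δ, ⟨hδν, _⟩, hxδ⟩ := hgt _ x hx hxρ
    exact lt_trans hxδ hδν.2
  -- strict convexity via MVT
  have hconv : ∀ x, 0 < x → x < ν → f x < x * f' x ∧ f x < 0 := by
    intro x hx hxν
    obtain ⟨hxR, hfx'⟩ := hν' x hx hxν
    have hsub : Set.Icc 0 x ⊆ Set.Ico 0 R := fun y hy => ⟨hy.1, lt_of_le_of_lt hy.2 hxR⟩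
    have hcontf : ContinuousOn f (Set.Icc 0 x) := fun y hy =>
      ((hderiv y (hsub hy)).continuousWithinAt).mono hsub
    have hd : ∀ y ∈ Set.Ioo 0 x, HasDerivAt f (f' y) y := by
      intro y hy
      exact (hderiv y ⟨hy.1.le, lt_trans hy.2 hxR⟩).hasDerivAt
        (Ico_mem_nhds hy.1 (lt_trans hy.2 hxR))
    obtain ⟨c, hc, hc'⟩ := exists_hasDerivAt_eq_slope f f' hx hcontf hd
    have hfx : f x = f' c * x := by
      rw [hc', hf0]
      field_simp
      simp [hx.ne']
    have hcx : f' c < f' x := hmono ⟨hc.1.le, lt_trans hc.2 hxR⟩ ⟨hx.le, hxR⟩ hc.2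
    constructor
    · rw [hfx]; nlinarith
    · rw [hfx]; nlinarith
  -- key step: for x ∈ (0,ρ), 0 < |n(x)| < x
  have hkey : ∀ x, 0 < x → x < ρ → 0 < |x - f x / f' x| ∧ |x - f x / f' x| < x := by
    intro x hx hxρ
    have hxρ' := hxρ
    rw [hρ] at hxρ'
    obtain ⟨δ, ⟨hδν, hδ⟩, hxδ⟩ := hgt _ x hx hxρ'
    have hxν : x < ν := lt_trans hxδ hδν.2
    obtain ⟨hxR, hfx'⟩ := hν' x hx hxν
    obtain ⟨h1, h2⟩ := hconv x hx hxν
    have hcond := hδ x ⟨hx, hxδ⟩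
    have hneg : x - f x / f' x < 0 := by
      have : x < f x / f' x := (lt_div_iff_of_neg hfx').mpr (by nlinarith)
      linarith
    have habs : |x - f x / f' x| = f x / f' x - x := by
      rw [abs_of_neg hneg]; ring
    rw [habs]
    refine ⟨by linarith, ?_⟩
    have := (div_lt_one hx).mp hcond
    linarith
  -- membership
  have hmem : ∀ k, t k ∈ Set.Ioo 0 ρ := by
    intro k
    induction k with
    | zero => exact ht0
    | succ n ih =>
      obtain ⟨h1, h2⟩ := hkey (t n) ih.1 ih.2
      rw [hrec n]
      exact ⟨h1, lt_trans h2 ih.2⟩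
  have hdec : ∀ k, t (k + 1) < t k := by
    intro k
    rw [hrec k]
    exact (hkey (t k) (hmem k).1 (hmem k).2).2
  have hanti : StrictAnti t := strictAnti_nat_of_succ_lt hdec
  refine ⟨hanti, hmem, ?_⟩
  have hbdd : BddBelow (Set.range t) := ⟨0, by rintro _ ⟨k, rfl⟩; exact (hmem k).1.le⟩
  have htend : Filter.Tendsto t Filter.atTop (nhds (⨅ k, t k)) :=
    tendsto_atTop_ciInf hanti.antitone hbdd
  set L := ⨅ k, t k with hL
  have hL0 : 0 ≤ L := le_ciInf fun k => (hmem k).1.le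
  rcases eq_or_lt_of_le hL0 with h0 | hpos
  · rwa [← h0] at htend
  · exfalso
    have hLρ : L < ρ := lt_of_le_of_lt (ciInf_le hbdd 0) (hmem 0).2
    have hLν : L < ν := hρν L hpos hLρ
    obtain ⟨hLR, hfL'⟩ := hν' L hpos hLν
    have hIco : ∀ k, t k ∈ Set.Ico 0 R := by
      intro k
      have h := hmem k
      exact ⟨h.1.le, (hν' _ h.1 (hρν _ h.1 h.2)).1⟩
    have htendW : Filter.Tendsto t Filter.atTop (nhdsWithin L (Set.Ico 0 R)) :=
      tendsto_nhdsWithin_of_tendsto_nhds_of_eventually_within t htend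
        (Filter.Eventually.of_forall hIco)
    have hfL : Filter.Tendsto (fun k => f (t k)) Filter.atTop (nhds (f L)) :=
      ((hderiv L ⟨hpos.le, hLR⟩).continuousWithinAt).tendsto.comp htendW
    have hfL'c : Filter.Tendsto (fun k => f' (t k)) Filter.atTop (nhds (f' L)) :=
      ((hcont L ⟨hpos.le, hLR⟩)).tendsto.comp htendW
    have hdiv : Filter.Tendsto (fun k => t k - f (t k) / f' (t k)) Filter.atTop
        (nhds (L - f L / f' L)) :=
      htend.sub (hfL.div hfL'c (ne_of_lt hfL'))
    have habs : Filter.Tendsto (fun k => t (k + 1)) Filter.atTop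
        (nhds |L - f L / f' L|) := by
      have h := hdiv.abs
      simpa only [← hrec] using h
    have habs2 : Filter.Tendsto (fun k => t (k + 1)) Filter.atTop (nhds L) :=
      htend.comp (Filter.tendsto_add_atTop_nat 1)
    have hEq : L = |L - f L / f' L| := tendsto_nhds_unique habs2 habs
    have hlt := (hkey L hpos hLρ).2
    linarith [hEq ▸ hlt]
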